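/- arXiv:2602.19469 — 2 statements merged into one kernel-verified Lean document; each statement's English description precedes it below -/
import Mathlib

section
/- Let q ≥ 2, θ₁ := exp(2πi/q). Let (X_a)_{a=0}^{q−1} be independent real random variables each distributed N(0, 1/q) and M_j := X_j − (1/q) Σ_b X_b. For w = (w_1,…,w_{q−1}) ∈ ℂ^{q−1} set S_j(w) := Σ_{k=1}^{q−1} w_k θ₁^{jk} for j = 0,…,q−1, and define G(M, w) := exp( −(1/(2q)) Σ_{j=0}^{q−1} S_j(w)² + Σ_{j=0}^{q−1} M_j S_j(w) ). Then for every ω ∈ ℝ^q, E[ e^{i Σ_a ω_a M_a} · G(M, w) ] = E[ e^{i Σ_a ω_a M_a} ] · exp( (i/q) Σ_{k=1}^{q−1} ( Σ_{a=0}^{q−1} ω_a θ₁^{ak} ) w_k ), where E[ e^{i Σ_a ω_a M_a} ] = exp( −(1/(2q)) Σ_a ω_a² + (1/(2q²)) (Σ_a ω_a)² ). -/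
open MeasureTheory ProbabilityTheory Finset
open scoped NNReal ENNReal

variable {Ω : Type} [MeasurableSpace Ω] {μ : Measure Ω}

lemma aux_integral_complex_ofReal {f : Ω → ℝ} :
    ∫ ω, ((f ω : ℝ) : ℂ) ∂μ = ((∫ ω, f ω ∂μ : ℝ) : ℂ) := integral_ofReal (𝕜 := ℂ)

/-- Product of two independent integrable complex random variables. -/
lemma aux_indep_integral_mul {f g : Ω → ℂ} (h : IndepFun f g μ)
    (hf : Integrable f μ) (hg : Integrable g μ) :
    ∫ ω, f ω * g ω ∂μ = (∫ ω, f ω ∂μ) * ∫ ω, g ω ∂μ := by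
  have hfr : Integrable (fun ω => (f ω).re) μ := hf.re
  have hfi : Integrable (fun ω => (f ω).im) μ := hf.im
  have hgr : Integrable (fun ω => (g ω).re) μ := hg.re
  have hgi : Integrable (fun ω => (g ω).im) μ := hg.im
  have hrr : IndepFun (fun ω => (f ω).re) (fun ω => (g ω).re) μ :=
    h.comp Complex.measurable_re Complex.measurable_re
  have hri : IndepFun (fun ω => (f ω).re) (fun ω => (g ω).im) μ :=
    h.comp Complex.measurable_re Complex.measurable_im
  have hir : IndepFun (fun ω => (f ω).im) (fun ω => (g ω).re) μ :=
    h.comp Complex.measurable_im Complex.measurable_re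
  have hii : IndepFun (fun ω => (f ω).im) (fun ω => (g ω).im) μ :=
    h.comp Complex.measurable_im Complex.measurable_im
  have e1 : ∫ ω, (f ω).re * (g ω).re ∂μ
      = (∫ ω, (f ω).re ∂μ) * ∫ ω, (g ω).re ∂μ := hrr.integral_fun_mul_eq_mul_integral hfr.aestronglyMeasurable hgr.aestronglyMeasurable
  have e2 : ∫ ω, (f ω).re * (g ω).im ∂μ
      = (∫ ω, (f ω).re ∂μ) * ∫ ω, (g ω).im ∂μ := hri.integral_fun_mul_eq_mul_integral hfr.aestronglyMeasurable hgi.aestronglyMeasurable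
  have e3 : ∫ ω, (f ω).im * (g ω).re ∂μ
      = (∫ ω, (f ω).im ∂μ) * ∫ ω, (g ω).re ∂μ := hir.integral_fun_mul_eq_mul_integral hfi.aestronglyMeasurable hgr.aestronglyMeasurable
  have e4 : ∫ ω, (f ω).im * (g ω).im ∂μ
      = (∫ ω, (f ω).im ∂μ) * ∫ ω, (g ω).im ∂μ := hii.integral_fun_mul_eq_mul_integral hfi.aestronglyMeasurable hgi.aestronglyMeasurable
  have hF : ∫ ω, f ω ∂μ
      = ((∫ ω, (f ω).re ∂μ : ℝ) : ℂ) + ((∫ ω, (f ω).im ∂μ : ℝ) : ℂ) * Complex.I := by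
    simpa using (integral_re_add_im hf).symm
  have hG : ∫ ω, g ω ∂μ
      = ((∫ ω, (g ω).re ∂μ : ℝ) : ℂ) + ((∫ ω, (g ω).im ∂μ : ℝ) : ℂ) * Complex.I := by
    simpa using (integral_re_add_im hg).symm
  have hfg : ∀ ω, f ω * g ω
      = (((f ω).re * (g ω).re - (f ω).im * (g ω).im : ℝ) : ℂ)
        + (((f ω).re * (g ω).im + (f ω).im * (g ω).re : ℝ) : ℂ) * Complex.I := by
    intro ω
    rw [← Complex.re_add_im (f ω), ← Complex.re_add_im (g ω)]
    push_cast
    ring_nf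
    simp [Complex.I_sq]
    ring
  have i1 : Integrable (fun ω => (f ω).re * (g ω).re) μ := hrr.integrable_mul hfr hgr
  have i2 : Integrable (fun ω => (f ω).re * (g ω).im) μ := hri.integrable_mul hfr hgi
  have i3 : Integrable (fun ω => (f ω).im * (g ω).re) μ := hir.integrable_mul hfi hgr
  have i4 : Integrable (fun ω => (f ω).im * (g ω).im) μ := hii.integrable_mul hfi hgi
  have hint1 : Integrable (fun ω => (f ω).re * (g ω).re - (f ω).im * (g ω).im) μ := i1.sub i4
  have hint2 : Integrable (fun ω => (f ω).re * (g ω).im + (f ω).im * (g ω).re) μ := i2.add i3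
  calc ∫ ω, f ω * g ω ∂μ
      = ∫ ω, ((((f ω).re * (g ω).re - (f ω).im * (g ω).im : ℝ) : ℂ)
          + (((f ω).re * (g ω).im + (f ω).im * (g ω).re : ℝ) : ℂ) * Complex.I) ∂μ := by
        simp_rw [hfg]
    _ = ((∫ ω, ((f ω).re * (g ω).re - (f ω).im * (g ω).im) ∂μ : ℝ) : ℂ)
          + ((∫ ω, ((f ω).re * (g ω).im + (f ω).im * (g ω).re) ∂μ : ℝ) : ℂ) * Complex.I := by
        have hA : Integrable (fun ω =>
            (((f ω).re * (g ω).re - (f ω).im * (g ω).im : ℝ) : ℂ)) μ := hint1.ofReal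
        have hB : Integrable (fun ω =>
            (((f ω).re * (g ω).im + (f ω).im * (g ω).re : ℝ) : ℂ) * Complex.I) μ :=
          (hint2.ofReal (𝕜 := ℂ)).mul_const Complex.I
        rw [integral_add hA hB, integral_mul_const, aux_integral_complex_ofReal, aux_integral_complex_ofReal]
    _ = (∫ ω, f ω ∂μ) * ∫ ω, g ω ∂μ := by
        rw [integral_sub i1 i4, integral_add i2 i3, e1, e2, e3, e4, hF, hG]
        push_cast
        ring_nf
        simp only [Complex.I_sq]
        ring

/-- Integral of a product of independent complex random variables over a finset. -/
lemma aux_indep_integral_prod [IsProbabilityMeasure μ] {ι : Type} [DecidableEq ι] {g : ι → Ω → ℂ}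
    (hindep : iIndepFun g μ) (hm : ∀ i, Measurable (g i))
    (hint : ∀ i, Integrable (g i) μ) (s : Finset ι) :
    Integrable (fun ω => ∏ i ∈ s, g i ω) μ ∧
      ∫ ω, ∏ i ∈ s, g i ω ∂μ = ∏ i ∈ s, ∫ ω, g i ω ∂μ := by
  classical
  induction s using Finset.induction_on with
  | empty => simp [measure_univ]
  | insert _ _ hi _ =>
    rename_i i s ih
    have hIndep : IndepFun (fun ω => ∏ j ∈ s, g j ω) (g i) μ := by
      have h0 := hindep.indepFun_finsetProd_of_notMem hm hi
      have heq : (∏ j ∈ s, g j) = fun ω => ∏ j ∈ s, g j ω := by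
        funext ω; simp
      rwa [heq] at h0
    have hint' : Integrable (fun ω => (∏ j ∈ s, g j ω) * g i ω) μ :=
      hIndep.integrable_mul ih.1 (hint i)
    constructor
    · simp_rw [Finset.prod_insert hi]
      refine hint'.congr (Filter.Eventually.of_forall fun ω => ?_)
      ring
    · simp_rw [Finset.prod_insert hi]
      have : ∀ ω, g i ω * ∏ j ∈ s, g j ω = (∏ j ∈ s, g j ω) * g i ω := fun ω => mul_comm _ _
      simp_rw [this]
      rw [aux_indep_integral_mul hIndep ih.1 (hint i), ih.2, mul_comm]

/-- Complex mgf of a centered real Gaussian. -/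
lemma aux_gaussian_cexp (v : ℝ≥0) (hv : v ≠ 0) (c : ℂ) :
    Integrable (fun x : ℝ => Complex.exp (c * x)) (gaussianReal 0 v) ∧
      ∫ x : ℝ, Complex.exp (c * x) ∂(gaussianReal 0 v)
        = Complex.exp ((v : ℂ) * c ^ 2 / 2) := by
  have hv0 : (0 : ℝ) < (v : ℝ) := lt_of_le_of_ne (v.coe_nonneg) (by exact_mod_cast hv.symm)
  set b : ℂ := -(1 / (2 * (v : ℝ)) : ℝ) with hb
  have hbre : b.re < 0 := by
    simp [hb]
    positivity
  have hpdf : ∀ x : ℝ, (gaussianPDFReal 0 v x : ℂ) * Complex.exp (c * x)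
      = ((Real.sqrt (2 * Real.pi * v))⁻¹ : ℝ) * Complex.exp (b * x ^ 2 + c * x + 0) := by
    intro x
    rw [gaussianPDFReal]
    push_cast
    rw [mul_assoc, ← Complex.exp_add]
    congr 2
    rw [hb]
    push_cast
    ring
  have hmeas : Measurable fun x : ℝ => (gaussianPDFReal 0 v x).toNNReal :=
    (measurable_gaussianPDFReal 0 v).real_toNNReal
  have hdens : gaussianReal 0 v
      = volume.withDensity (fun x => ((gaussianPDFReal 0 v x).toNNReal : ℝ≥0∞)) := by
    rw [gaussianReal_of_var_ne_zero 0 hv]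
    rfl
  have hsmul : ∀ x : ℝ, ((gaussianPDFReal 0 v x).toNNReal : ℝ) • Complex.exp (c * x)
      = (gaussianPDFReal 0 v x : ℂ) * Complex.exp (c * x) := by
    intro x
    rw [Real.coe_toNNReal _ (gaussianPDFReal_nonneg 0 v x), Complex.real_smul]
  have hIntegrable : Integrable (fun x : ℝ => Complex.exp (c * x)) (gaussianReal 0 v) := by
    rw [hdens, integrable_withDensity_iff_integrable_smul hmeas]
    refine Integrable.congr ?_ (Filter.Eventually.of_forall fun x => (hsmul x).symm)
    refine Integrable.congr ((integrable_cexp_quadratic' hbre c 0).const_mul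
      (((Real.sqrt (2 * Real.pi * v))⁻¹ : ℝ) : ℂ)) (Filter.Eventually.of_forall fun x => ?_)
    simpa using (hpdf x).symm
  refine ⟨hIntegrable, ?_⟩
  rw [hdens, integral_withDensity_eq_integral_smul hmeas]
  have : ∀ x : ℝ, ((gaussianPDFReal 0 v x).toNNReal : ℝ≥0) • Complex.exp (c * x)
      = ((Real.sqrt (2 * Real.pi * v))⁻¹ : ℝ) • Complex.exp (b * x ^ 2 + c * x + 0) := by
    intro x
    rw [NNReal.smul_def, hsmul x, hpdf x, Complex.real_smul]
  simp_rw [this]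
  rw [integral_smul, integral_cexp_quadratic hbre c 0]
  have hvc : ((v : ℝ) : ℂ) ≠ 0 := by exact_mod_cast hv0.ne'
  have h2 : (0 : ℝ) ≤ 2 * Real.pi * v := by positivity
  have hπb : ((Real.pi : ℝ) : ℂ) / -b = ((2 * Real.pi * v : ℝ) : ℂ) := by
    rw [hb]
    push_cast
    rw [neg_neg]
    field_simp
  have hpow' : (((Real.pi : ℝ) : ℂ) / -b) ^ (1 / 2 : ℂ)
      = ((Real.sqrt (2 * Real.pi * v) : ℝ) : ℂ) := by
    rw [hπb, show ((1 : ℂ)/2) = (((1 : ℝ)/2 : ℝ) : ℂ) by norm_num,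
      ← Complex.ofReal_cpow h2, Real.sqrt_eq_rpow]
  have hexp : (0 : ℂ) - c ^ 2 / (4 * b) = (v : ℂ) * c ^ 2 / 2 := by
    rw [hb]
    push_cast
    field_simp
    ring
  rw [hexp, hpow']
  rw [Complex.real_smul, ← mul_assoc, ← Complex.ofReal_mul,
    inv_mul_cancel₀ (Real.sqrt_ne_zero'.mpr (by positivity)), Complex.ofReal_one, one_mul]

lemma aux_iIndepFun_congr {ι : Type} [Countable ι] {f f' : ι → Ω → ℝ}
    (h : iIndepFun f μ) (heq : ∀ i, f i =ᵐ[μ] f' i) :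
    iIndepFun f' μ := by
  rw [iIndepFun_iff_measure_inter_preimage_eq_mul] at h ⊢
  intro S sets hsets
  have hall : ∀ᵐ ω ∂μ, ∀ i, f i ω = f' i ω := ae_all_iff.mpr heq
  have hset : ∀ i : ι, (f i ⁻¹' sets i : Set Ω) =ᵐ[μ] (f' i ⁻¹' sets i : Set Ω) := by
    intro i
    rw [Filter.eventuallyEq_set]
    filter_upwards [heq i] with ω hω
    simp [Set.mem_preimage, hω]
  have hinter : (⋂ i ∈ S, f i ⁻¹' sets i : Set Ω) =ᵐ[μ] (⋂ i ∈ S, f' i ⁻¹' sets i : Set Ω) := by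
    rw [Filter.eventuallyEq_set]
    filter_upwards [hall] with ω hω
    simp only [Set.mem_iInter, Set.mem_preimage, hω]
  rw [← measure_congr hinter, h S hsets]
  exact Finset.prod_congr rfl fun i _ => measure_congr (hset i)

lemma aux_root_sum {q : ℕ} {m : ℕ} (hm0 : 0 < m) (hmq : m < q) :
    ∑ j : Fin q, (Complex.exp (2 * Real.pi * Complex.I / q)) ^ ((j : ℕ) * m) = 0 := by
  have hq0 : q ≠ 0 := by omega
  set θ : ℂ := Complex.exp (2 * Real.pi * Complex.I / q) with hθ
  have hprim : IsPrimitiveRoot θ q := Complex.isPrimitiveRoot_exp q hq0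
  have h1 : θ ^ m ≠ 1 := hprim.pow_ne_one_of_pos_of_lt hm0.ne' hmq
  have h2 : ∀ j : ℕ, θ ^ (j * m) = (θ ^ m) ^ j := fun j => by
    rw [mul_comm, pow_mul]
  calc ∑ j : Fin q, θ ^ ((j : ℕ) * m) = ∑ j ∈ Finset.range q, (θ ^ m) ^ j := by
        rw [← Fin.sum_univ_eq_sum_range (fun j => (θ ^ m) ^ j) q]
        exact Finset.sum_congr rfl fun j _ => h2 j
    _ = ((θ ^ m) ^ q - 1) / (θ ^ m - 1) := geom_sum_eq h1 q
    _ = 0 := by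
        rw [← pow_mul, mul_comm, pow_mul, hprim.pow_eq_one]
        simp

lemma aux_mgf {q : ℕ} (hq : 2 ≤ q) [IsProbabilityMeasure μ] {X : Fin q → Ω → ℝ}
    (hm : ∀ a, Measurable (X a))
    (hindep : iIndepFun X μ)
    (hgauss : ∀ a, Measure.map (X a) μ = gaussianReal 0 ((q : ℝ≥0))⁻¹)
    (d : Fin q → ℂ) :
    ∫ ω, Complex.exp (∑ a, d a * (X a ω : ℂ)) ∂μ
      = Complex.exp ((∑ a, d a ^ 2) / (2 * (q : ℂ))) := by
  have hqne : (q : ℝ≥0) ≠ 0 := by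
    simp only [ne_eq, Nat.cast_eq_zero]
    omega
  have hv : ((q : ℝ≥0))⁻¹ ≠ 0 := inv_ne_zero hqne
  have hqc : (q : ℂ) ≠ 0 := by
    simp only [ne_eq, Nat.cast_eq_zero]
    omega
  set g : Fin q → Ω → ℂ := fun a ω => Complex.exp (d a * (X a ω : ℂ)) with hg
  have hgm : ∀ a, Measurable (g a) := fun a =>
    Complex.measurable_exp.comp
      (measurable_const.mul (Complex.measurable_ofReal.comp (hm a)))
  have hasm : ∀ a, AEStronglyMeasurable (fun x : ℝ => Complex.exp (d a * x))
      (Measure.map (X a) μ) := fun a =>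
    (Complex.continuous_exp.comp (continuous_const.mul Complex.continuous_ofReal)).aestronglyMeasurable
  have hmapint := fun a => aux_gaussian_cexp ((q : ℝ≥0))⁻¹ hv (d a)
  have hint : ∀ a, Integrable (g a) μ := by
    intro a
    have h0 := (hmapint a).1
    rw [← hgauss a] at h0
    exact (integrable_map_measure (hasm a) (hm a).aemeasurable).mp h0
  have hindepg : iIndepFun g μ :=
    hindep.comp (fun a x => Complex.exp (d a * x))
      (fun a => Complex.measurable_exp.comp (measurable_const.mul Complex.measurable_ofReal))
  have hprod := aux_indep_integral_prod hindepg hgm hint Finset.univ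
  calc ∫ ω, Complex.exp (∑ a, d a * (X a ω : ℂ)) ∂μ = ∫ ω, ∏ a, g a ω ∂μ := by
        simp_rw [hg, Complex.exp_sum]
    _ = ∏ a, ∫ ω, g a ω ∂μ := hprod.2
    _ = ∏ a, Complex.exp (d a ^ 2 / (2 * (q : ℂ))) := by
        refine Finset.prod_congr rfl fun a _ => ?_
        have h1 : ∫ ω, g a ω ∂μ = ∫ x, Complex.exp (d a * x) ∂(Measure.map (X a) μ) :=
          (integral_map (hm a).aemeasurable (hasm a)).symm
        rw [h1, hgauss a, (hmapint a).2]
        congr 1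
        push_cast
        field_simp
    _ = Complex.exp ((∑ a, d a ^ 2) / (2 * (q : ℂ))) := by
        rw [← Complex.exp_sum, Finset.sum_div]


/-- Transform of the generating function of the limiting multivariate
Krawtchouk polynomials: for the singular Gaussian `M` with `Cov(M_a,M_b)=(1/q)(δ_{ab}−1/q)`
and `G(M,w) = exp(−(1/(2q)) Σ_j S_j(w)² + Σ_j M_j S_j(w))`, `S_j(w)=Σ_k w_k θ₁^{jk}`,
`E[e^{iω·M} G(M,w)] = E[e^{iω·M}] · exp((i/q) Σ_k (Σ_a ω_a θ₁^{ak}) w_k)`. -/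
theorem statement14 (q : ℕ) (hq : 2 ≤ q)
    {Ω : Type} [MeasurableSpace Ω] (μ : Measure Ω) [IsProbabilityMeasure μ]
    (X : Fin q → Ω → ℝ)
    (hindep : iIndepFun X μ)
    (hgauss : ∀ a, Measure.map (X a) μ = gaussianReal 0 ((q : NNReal))⁻¹) :
    let θ₁ : ℂ := Complex.exp (2 * Real.pi * Complex.I / q)
    let M : Fin q → Ω → ℝ := fun a ω => X a ω - (1 / (q : ℝ)) * ∑ b, X b ω
    let S : Fin q → (Fin (q - 1) → ℂ) → ℂ := fun j w =>
      ∑ k, w k * θ₁ ^ ((j : ℕ) * ((k : ℕ) + 1))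
    let Gfun : (Fin q → ℝ) → (Fin (q - 1) → ℂ) → ℂ := fun m w =>
      Complex.exp (-(1 / (2 * (q : ℂ))) * ∑ j, (S j w) ^ 2
        + ∑ j, (m j : ℂ) * S j w)
    ∀ (w : Fin (q - 1) → ℂ) (v : Fin q → ℝ),
      ((∫ ω, Complex.exp (Complex.I * ∑ a, (v a : ℂ) * (M a ω : ℂ))
            * Gfun (fun j => M j ω) w ∂μ)
        = (∫ ω, Complex.exp (Complex.I * ∑ a, (v a : ℂ) * (M a ω : ℂ)) ∂μ)
          * Complex.exp ((Complex.I / (q : ℂ)) *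
              ∑ k : Fin (q - 1), (∑ a : Fin q, (v a : ℂ)
                * θ₁ ^ ((a : ℕ) * ((k : ℕ) + 1))) * w k)) ∧
      ((∫ ω, Complex.exp (Complex.I * ∑ a, (v a : ℂ) * (M a ω : ℂ)) ∂μ)
        = Complex.exp (-(1 / (2 * (q : ℂ))) * ∑ a, (v a : ℂ) ^ 2
            + (1 / (2 * (q : ℂ) ^ 2)) * (∑ a, (v a : ℂ)) ^ 2)) := by
  intro θ₁ M S Gfun w v
  have hq0 : q ≠ 0 := by omega
  have hqc : (q : ℂ) ≠ 0 := Nat.cast_ne_zero.mpr hq0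
  -- measurable modifications
  have hXae : ∀ a, AEMeasurable (X a) μ := by
    intro a
    by_contra hc
    have h0 := Measure.map_of_not_aemeasurable hc
    rw [hgauss a] at h0
    exact (IsProbabilityMeasure.ne_zero (gaussianReal 0 ((q : ℝ≥0))⁻¹)) h0
  set X' : Fin q → Ω → ℝ := fun a => (hXae a).mk (X a) with hX'
  have hX'm : ∀ a, Measurable (X' a) := fun a => (hXae a).measurable_mk
  have heq : ∀ a, X a =ᵐ[μ] X' a := fun a => (hXae a).ae_eq_mk
  have hall : ∀ᵐ ω ∂μ, ∀ a, X a ω = X' a ω := ae_all_iff.mpr heq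
  have hgauss' : ∀ a, Measure.map (X' a) μ = gaussianReal 0 ((q : ℝ≥0))⁻¹ := fun a => by
    rw [← Measure.map_congr (heq a), hgauss a]
  have hindep' := aux_iIndepFun_congr hindep heq
  have key := aux_mgf (μ := μ) hq hX'm hindep' hgauss'
  -- linear algebra helper
  have lin : ∀ (c : Fin q → ℂ) (x : Fin q → ℝ),
      ∑ a, c a * ((x a : ℂ) - (1/(q:ℂ)) * ∑ b, (x b : ℂ))
        = ∑ a, (c a - (∑ b, c b)/(q:ℂ)) * (x a : ℂ) := by
    intro c x
    simp only [mul_sub, sub_mul, Finset.sum_sub_distrib]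
    congr 1
    rw [← Finset.sum_mul, ← Finset.mul_sum]
    ring
  -- sum of S over all residues vanishes
  have hroot : ∀ k : Fin (q - 1), ∑ a : Fin q, θ₁ ^ ((a : ℕ) * ((k : ℕ) + 1)) = 0 := by
    intro k
    have hk := k.isLt
    exact aux_root_sum (by omega) (by omega)
  have hSsum : ∑ a, S a w = 0 := by
    rw [show (∑ a, S a w) = ∑ a : Fin q, ∑ k : Fin (q-1), w k * θ₁ ^ ((a:ℕ) * ((k:ℕ)+1)) from rfl,
      Finset.sum_comm]
    refine Finset.sum_eq_zero fun k _ => ?_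
    rw [← Finset.mul_sum, hroot k, mul_zero]
  -- a.e. description of M in terms of X'
  have hMx : ∀ᵐ ω ∂μ, ∀ a, ((M a ω : ℝ) : ℂ)
      = (X' a ω : ℂ) - (1/(q:ℂ)) * ∑ b, (X' b ω : ℂ) := by
    filter_upwards [hall] with ω hω
    intro a
    show ((X a ω - (1 / (q : ℝ)) * ∑ b, X b ω : ℝ) : ℂ) = _
    push_cast
    rw [hω a, Finset.sum_congr rfl (fun b _ => by rw [hω b])]
  -- the two exponent coefficient families
  set e : Fin q → ℂ := fun a => Complex.I * ((v a : ℂ) - (∑ b, (v b : ℂ))/(q:ℂ)) with he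
  set d : Fin q → ℂ := fun a => S a w + Complex.I * ((v a : ℂ) - (∑ b, (v b : ℂ))/(q:ℂ)) with hd
  -- characteristic function
  have char : ∫ ω, Complex.exp (Complex.I * ∑ a, (v a : ℂ) * (M a ω : ℂ)) ∂μ
      = Complex.exp ((∑ a, e a ^ 2) / (2 * (q:ℂ))) := by
    rw [← key e]
    apply integral_congr_ae
    filter_upwards [hMx] with ω hω
    congr 1
    calc Complex.I * ∑ a, (v a : ℂ) * ((M a ω : ℝ) : ℂ)
        = ∑ a, (Complex.I * (v a : ℂ)) * ((M a ω : ℝ) : ℂ) := by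
          rw [Finset.mul_sum]
          exact Finset.sum_congr rfl fun a _ => by ring
      _ = ∑ a, (Complex.I * (v a : ℂ)) * ((X' a ω : ℂ) - (1/(q:ℂ)) * ∑ b, (X' b ω : ℂ)) := by
          exact Finset.sum_congr rfl fun a _ => by rw [hω a]
      _ = ∑ a, (Complex.I * (v a : ℂ) - (∑ b, Complex.I * (v b : ℂ))/(q:ℂ)) * (X' a ω : ℂ) :=
          lin _ _
      _ = ∑ a, e a * (X' a ω : ℂ) := by
          refine Finset.sum_congr rfl fun a _ => ?_
          rw [he, ← Finset.mul_sum]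
          ring
  -- square sum identity
  have hesq : (∑ a, e a ^ 2) = -(∑ a, (v a : ℂ)^2) + (∑ a, (v a : ℂ))^2/(q:ℂ) := by
    rw [he]
    have h1 : ∀ a ∈ Finset.univ, (Complex.I * ((v a : ℂ) - (∑ b, (v b : ℂ))/(q:ℂ)))^2
        = -((v a : ℂ)^2) + 2*((∑ b, (v b : ℂ))/(q:ℂ))*(v a : ℂ)
          - ((∑ b, (v b : ℂ))/(q:ℂ))^2 := by
      intro a _
      rw [mul_pow, Complex.I_sq]
      ring
    rw [Finset.sum_congr rfl h1]
    simp only [Finset.sum_add_distrib, Finset.sum_sub_distrib, Finset.sum_neg_distrib,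
      Finset.sum_const, Finset.card_univ, Fintype.card_fin, nsmul_eq_mul, ← Finset.mul_sum]
    field_simp
    ring
  refine ⟨?_, ?_⟩
  · -- statement 1
    -- swap of double sum
    have hswap : ∑ a, (v a : ℂ) * S a w
        = ∑ k : Fin (q-1), (∑ a : Fin q, (v a : ℂ) * θ₁ ^ ((a:ℕ) * ((k:ℕ)+1))) * w k := by
      rw [show (∑ a, (v a : ℂ) * S a w)
          = ∑ a : Fin q, ∑ k : Fin (q-1), (v a : ℂ) * (w k * θ₁ ^ ((a:ℕ) * ((k:ℕ)+1))) from by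
            exact Finset.sum_congr rfl fun a _ => Finset.mul_sum _ _ _,
        Finset.sum_comm]
      refine Finset.sum_congr rfl fun k _ => ?_
      rw [Finset.sum_mul]
      exact Finset.sum_congr rfl fun a _ => by ring
    have hdsum : ∑ a, d a ^ 2
        = ∑ a, (S a w)^2 + ∑ a, e a ^ 2 + 2*Complex.I*∑ a, (v a : ℂ) * S a w := by
      have h1 : ∀ a ∈ Finset.univ, d a ^ 2
          = (S a w)^2 + e a ^2 + 2*Complex.I*((v a : ℂ) * S a w)
            - 2*Complex.I*((∑ b, (v b : ℂ))/(q:ℂ))*(S a w) := by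
        intro a _
        rw [hd, he]
        ring
      rw [Finset.sum_congr rfl h1]
      simp only [Finset.sum_add_distrib, Finset.sum_sub_distrib, ← Finset.mul_sum, hSsum,
        mul_zero, sub_zero]
    -- LHS computation
    have lhs1 : ∫ ω, Complex.exp (Complex.I * ∑ a, (v a : ℂ) * (M a ω : ℂ))
          * Gfun (fun j => M j ω) w ∂μ
        = Complex.exp (-(1 / (2 * (q : ℂ))) * ∑ j, (S j w) ^ 2)
          * Complex.exp ((∑ a, d a ^ 2) / (2 * (q:ℂ))) := by
      rw [← key d, ← integral_const_mul]
      apply integral_congr_ae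
      filter_upwards [hMx] with ω hω
      show Complex.exp (Complex.I * ∑ a, (v a : ℂ) * (M a ω : ℂ))
          * Complex.exp (-(1 / (2 * (q : ℂ))) * ∑ j, (S j w) ^ 2
            + ∑ j, ((M j ω : ℝ) : ℂ) * S j w)
        = Complex.exp (-(1 / (2 * (q : ℂ))) * ∑ j, (S j w) ^ 2)
          * Complex.exp (∑ a, d a * (X' a ω : ℂ))
      rw [← Complex.exp_add, ← Complex.exp_add]
      congr 1
      have hlin : Complex.I * ∑ a, (v a : ℂ) * ((M a ω : ℝ) : ℂ)
          + ∑ j, ((M j ω : ℝ) : ℂ) * S j w = ∑ a, d a * (X' a ω : ℂ) := by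
        calc Complex.I * ∑ a, (v a : ℂ) * ((M a ω : ℝ) : ℂ)
              + ∑ j, ((M j ω : ℝ) : ℂ) * S j w
            = ∑ a, (S a w + Complex.I * (v a : ℂ)) * ((M a ω : ℝ) : ℂ) := by
              rw [Finset.mul_sum, ← Finset.sum_add_distrib]
              exact Finset.sum_congr rfl fun a _ => by ring
          _ = ∑ a, (S a w + Complex.I * (v a : ℂ))
                * ((X' a ω : ℂ) - (1/(q:ℂ)) * ∑ b, (X' b ω : ℂ)) :=
              Finset.sum_congr rfl fun a _ => by rw [hω a]
          _ = ∑ a, ((S a w + Complex.I * (v a : ℂ))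
                - (∑ b, (S b w + Complex.I * (v b : ℂ)))/(q:ℂ)) * (X' a ω : ℂ) := lin _ _
          _ = ∑ a, d a * (X' a ω : ℂ) := by
              refine Finset.sum_congr rfl fun a _ => ?_
              rw [Finset.sum_add_distrib, hSsum, ← Finset.mul_sum, hd]
              ring
      rw [← hlin]
      ring
    rw [lhs1, char, ← Complex.exp_add, ← Complex.exp_add]
    congr 1
    rw [hdsum, ← hswap]
    field_simp
    ring
  · -- statement 2
    rw [char]
    congr 1
    rw [hesq]
    field_simp
end

section
/- Let q ≥ 2, d ≥ 1, θ₁ := exp(2πi/q). For m = (m_0,…,m_{q−1}) ∈ ℕ^q with m_0 + ⋯ + m_{q−1} = d and l = (l_1,…,l_{q−1}) ∈ ℕ^{q−1}, define Q_l(m) ∈ ℂ as the coefficient of the monomial w_1^{l_1} ⋯ w_{q−1}^{l_{q−1}} in the polynomial Π_{j=0}^{q−1} ( 1 + Σ_{k=1}^{q−1} w_k θ₁^{jk} )^{m_j} in commuting variables w_1,…,w_{q−1} over ℂ. Then for all l, l' ∈ ℕ^{q−1} with |l| := l_1+⋯+l_{q−1} ≤ d and |l'| ≤ d, Σ_{m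 ∈ ℕ^q : m_0+⋯+m_{q−1}=d} (d! / (m_0! ⋯ m_{q−1}!)) q^{-d} · Q_l(m) · conj(Q_{l'}(m)) = 𝟙{l = l'} · d! / ( (d − |l|)! · l_1! ⋯ l_{q−1}! ). -/
open Finset

section Aux
open MvPolynomial

private theorem coeff_rename_mul17 {σ τ : Type*} [Fintype σ] [Fintype τ] {R : Type*} [CommSemiring R]
    (P : MvPolynomial σ R) (P' : MvPolynomial τ R) (l : σ → ℕ) (l' : τ → ℕ) :
    MvPolynomial.coeff (Finsupp.equivFunOnFinite.symm (Sum.elim l l'))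
      (rename Sum.inl P * rename Sum.inr P')
    = MvPolynomial.coeff (Finsupp.equivFunOnFinite.symm l) P
      * MvPolynomial.coeff (Finsupp.equivFunOnFinite.symm l') P' := by
  classical
  set μ : (σ ⊕ τ) →₀ ℕ := Finsupp.equivFunOnFinite.symm (Sum.elim l l') with hμ
  set a₀ : (σ ⊕ τ) →₀ ℕ := (Finsupp.equivFunOnFinite.symm l).mapDomain Sum.inl with ha₀
  set b₀ : (σ ⊕ τ) →₀ ℕ := (Finsupp.equivFunOnFinite.symm l').mapDomain Sum.inr with hb₀
  have hab : a₀ + b₀ = μ := by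
    ext x
    cases x with
    | inl s =>
        simp [ha₀, hb₀, hμ, Finsupp.mapDomain_apply Sum.inl_injective,
          Finsupp.mapDomain_notin_range (f := Sum.inr) _ (Sum.inl s) (by simp)]
    | inr t =>
        simp [ha₀, hb₀, hμ, Finsupp.mapDomain_apply Sum.inr_injective,
          Finsupp.mapDomain_notin_range (f := Sum.inl) _ (Sum.inr t) (by simp)]
  rw [MvPolynomial.coeff_mul]
  rw [Finset.sum_eq_single_of_mem (a₀, b₀) (Finset.HasAntidiagonal.mem_antidiagonal.2 hab)]
  · rw [ha₀, hb₀, coeff_rename_mapDomain _ Sum.inl_injective,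
      coeff_rename_mapDomain _ Sum.inr_injective]
  · rintro ⟨a, b⟩ hmem hne
    rw [Finset.HasAntidiagonal.mem_antidiagonal] at hmem
    by_contra hz
    have h1 : MvPolynomial.coeff a (rename Sum.inl P) ≠ 0 := fun h => hz (by simp [h])
    have h2 : MvPolynomial.coeff b (rename Sum.inr P') ≠ 0 := fun h => hz (by simp [h])
    obtain ⟨u, hu, -⟩ := coeff_rename_ne_zero _ _ _ h1
    obtain ⟨v, hv, -⟩ := coeff_rename_ne_zero _ _ _ h2
    apply hne
    have key : ∀ x : σ ⊕ τ, a x + b x = μ x := fun x => by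
      rw [← hmem]; rfl
    have hua : ∀ s : σ, u s = l s := by
      intro s
      have := key (Sum.inl s)
      rwa [← hu, ← hv, Finsupp.mapDomain_apply Sum.inl_injective,
        Finsupp.mapDomain_notin_range _ _ (by simp), add_zero, hμ,
        Finsupp.coe_equivFunOnFinite_symm, Sum.elim_inl] at this
    have hvb : ∀ t : τ, v t = l' t := by
      intro t
      have := key (Sum.inr t)
      rwa [← hu, ← hv, Finsupp.mapDomain_apply Sum.inr_injective,
        Finsupp.mapDomain_notin_range _ _ (by simp), zero_add, hμ,
        Finsupp.coe_equivFunOnFinite_symm, Sum.elim_inr] at this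
    have hu' : u = Finsupp.equivFunOnFinite.symm l := by
      ext s; rw [hua s]; rfl
    have hv' : v = Finsupp.equivFunOnFinite.symm l' := by
      ext t; rw [hvb t]; rfl
    rw [Prod.ext_iff]
    exact ⟨by rw [← hu, hu', ha₀], by rw [← hv, hv', hb₀]⟩

private theorem rou_sum1 {q : ℕ} {θ : ℂ} (hθ : IsPrimitiveRoot θ q) {a : ℕ} (ha : 0 < a)
    (haq : a < q) : ∑ j : Fin q, θ ^ ((j : ℕ) * a) = 0 := by
  have hne : θ ^ a ≠ 1 := hθ.pow_ne_one_of_pos_of_lt ha.ne' haq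
  have : ∀ j : Fin q, θ ^ ((j : ℕ) * a) = (θ ^ a) ^ (j : ℕ) := by
    intro j; rw [← pow_mul, mul_comm]
  rw [Finset.sum_congr rfl fun j _ => this j, Fin.sum_univ_eq_sum_range,
    geom_sum_eq hne, ← pow_mul, mul_comm a q, pow_mul, hθ.pow_eq_one, one_pow, sub_self,
    zero_div]

private theorem rou_sum2 {q : ℕ} {θ : ℂ} (hθ : IsPrimitiveRoot θ q) (hq : q ≠ 0)
    (hc : (starRingEnd ℂ) θ = θ⁻¹) {a b : ℕ} (ha : a < q) (hb : b < q) :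
    ∑ j : Fin q, θ ^ ((j : ℕ) * a) * (starRingEnd ℂ) (θ ^ ((j : ℕ) * b)) =
      if a = b then (q : ℂ) else 0 := by
  have hθ0 : θ ≠ 0 := hθ.ne_zero hq
  have hterm : ∀ j : Fin q, θ ^ ((j : ℕ) * a) * (starRingEnd ℂ) (θ ^ ((j : ℕ) * b))
      = (θ ^ a * (θ ^ b)⁻¹) ^ (j : ℕ) := by
    intro j
    rw [map_pow, hc, ← inv_pow, mul_pow, ← pow_mul, ← pow_mul, mul_comm a, mul_comm b, pow_mul,
      pow_mul, inv_pow]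
  rw [Finset.sum_congr rfl fun j _ => hterm j]
  by_cases hab : a = b
  · subst hab
    simp [mul_inv_cancel₀ (pow_ne_zero a hθ0)]
  · rw [if_neg hab]
    have hζ1 : θ ^ a * (θ ^ b)⁻¹ ≠ 1 := by
      intro h
      exact hab (hθ.pow_inj ha hb (by field_simp at h; exact h))
    rw [Fin.sum_univ_eq_sum_range, geom_sum_eq hζ1, mul_pow, ← pow_mul, mul_comm a q, pow_mul,
      hθ.pow_eq_one, one_pow, inv_pow, ← pow_mul, mul_comm b q, pow_mul, hθ.pow_eq_one, one_pow,
      inv_one, mul_one, sub_self, zero_div]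

private theorem sum_H17 {q : ℕ} (hq : 2 ≤ q) {θ : ℂ} (hθ : IsPrimitiveRoot θ q)
    (hc : (starRingEnd ℂ) θ = θ⁻¹) :
    ∑ j : Fin q,
      ((1 + ∑ k : Fin (q - 1), MvPolynomial.X (Sum.inl k) * MvPolynomial.C (θ ^ ((j : ℕ) * ((k : ℕ) + 1)))) *
       (1 + ∑ k : Fin (q - 1), MvPolynomial.X (Sum.inr k) * MvPolynomial.C ((starRingEnd ℂ) (θ ^ ((j : ℕ) * ((k : ℕ) + 1)))))
        : MvPolynomial (Fin (q - 1) ⊕ Fin (q - 1)) ℂ)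
    = MvPolynomial.C (q : ℂ) *
        (1 + ∑ k : Fin (q - 1), MvPolynomial.X (Sum.inl k) * MvPolynomial.X (Sum.inr k)) := by
  have hq0 : q ≠ 0 := by omega
  have hlt : ∀ k : Fin (q - 1), (k : ℕ) + 1 < q := fun k => by have := k.isLt; omega
  set A : Fin q → MvPolynomial (Fin (q - 1) ⊕ Fin (q - 1)) ℂ :=
    fun j => ∑ k : Fin (q - 1), MvPolynomial.X (Sum.inl k) * MvPolynomial.C (θ ^ ((j : ℕ) * ((k : ℕ) + 1))) with hA
  set B : Fin q → MvPolynomial (Fin (q - 1) ⊕ Fin (q - 1)) ℂ :=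
    fun j => ∑ k : Fin (q - 1), MvPolynomial.X (Sum.inr k) * MvPolynomial.C ((starRingEnd ℂ) (θ ^ ((j : ℕ) * ((k : ℕ) + 1)))) with hB
  have expand : ∀ j : Fin q, (1 + A j) * (1 + B j) = 1 + (A j + (B j + A j * B j)) := by
    intro j; ring
  rw [Finset.sum_congr rfl fun j _ => expand j, Finset.sum_add_distrib, Finset.sum_add_distrib,
    Finset.sum_add_distrib]
  have h1 : ∑ _j : Fin q, (1 : MvPolynomial (Fin (q - 1) ⊕ Fin (q - 1)) ℂ) = MvPolynomial.C (q : ℂ) := by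
    rw [Finset.sum_const, card_univ, Fintype.card_fin, nsmul_eq_mul, mul_one, MvPolynomial.C_eq_coe_nat]
  have hA0 : ∑ j : Fin q, A j = 0 := by
    rw [hA, Finset.sum_comm]
    apply Finset.sum_eq_zero
    intro k _
    rw [← Finset.mul_sum, ← map_sum, rou_sum1 hθ (Nat.succ_pos _) (hlt k), map_zero, mul_zero]
  have hB0 : ∑ j : Fin q, B j = 0 := by
    rw [hB, Finset.sum_comm]
    apply Finset.sum_eq_zero
    intro k _
    rw [← Finset.mul_sum, ← map_sum, ← map_sum (starRingEnd ℂ),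
      rou_sum1 hθ (Nat.succ_pos _) (hlt k), map_zero, map_zero, mul_zero]
  have hAB : ∑ j : Fin q, A j * B j
      = MvPolynomial.C (q : ℂ) * ∑ k : Fin (q - 1), MvPolynomial.X (Sum.inl k) * MvPolynomial.X (Sum.inr k) := by
    have hABj : ∀ j : Fin q, A j * B j = ∑ k : Fin (q - 1), ∑ k' : Fin (q - 1),
        (MvPolynomial.X (Sum.inl k) * MvPolynomial.X (Sum.inr k')) *
          MvPolynomial.C (θ ^ ((j : ℕ) * ((k : ℕ) + 1)) * (starRingEnd ℂ) (θ ^ ((j : ℕ) * ((k' : ℕ) + 1)))) := by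
      intro j
      rw [hA, hB, Finset.sum_mul_sum]
      refine Finset.sum_congr rfl fun k _ => Finset.sum_congr rfl fun k' _ => ?_
      rw [MvPolynomial.C_mul]; ring
    rw [Finset.sum_congr rfl fun j _ => hABj j, Finset.sum_comm]
    have step : ∀ k : Fin (q - 1), ∑ j : Fin q, ∑ k' : Fin (q - 1),
        (MvPolynomial.X (Sum.inl k) * MvPolynomial.X (Sum.inr k')) *
          MvPolynomial.C (θ ^ ((j : ℕ) * ((k : ℕ) + 1)) * (starRingEnd ℂ) (θ ^ ((j : ℕ) * ((k' : ℕ) + 1))))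
        = MvPolynomial.C (q : ℂ) * (MvPolynomial.X (Sum.inl k) * MvPolynomial.X (Sum.inr k)) := by
      intro k
      rw [Finset.sum_comm]
      have inner : ∀ k' : Fin (q - 1), ∑ j : Fin q,
          (MvPolynomial.X (Sum.inl k) * MvPolynomial.X (Sum.inr k')) *
            MvPolynomial.C (θ ^ ((j : ℕ) * ((k : ℕ) + 1)) * (starRingEnd ℂ) (θ ^ ((j : ℕ) * ((k' : ℕ) + 1))))
          = if k' = k then MvPolynomial.C (q : ℂ) * (MvPolynomial.X (Sum.inl k) * MvPolynomial.X (Sum.inr k)) else 0 := by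
        intro k'
        rw [← Finset.mul_sum, ← map_sum, rou_sum2 hθ hq0 hc (hlt k) (hlt k')]
        by_cases hkk : k' = k
        · subst hkk
          rw [if_pos rfl, if_pos rfl]; ring
        · rw [if_neg (fun h => hkk (by
            have : (k : ℕ) = (k' : ℕ) := by omega
            exact (Fin.val_injective this).symm)), if_neg hkk, map_zero, mul_zero]
      rw [Finset.sum_congr rfl fun k' _ => inner k', Finset.sum_ite_eq' univ k
        (fun _ => MvPolynomial.C (q : ℂ) * (MvPolynomial.X (Sum.inl k) * MvPolynomial.X (Sum.inr k))),
        if_pos (mem_univ k)]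
    rw [Finset.sum_congr rfl fun k _ => step k, Finset.mul_sum]
  rw [h1, hA0, hB0, hAB]
  ring

private theorem prod_X_pow_eq_monomial17 {σ R : Type*} [Fintype σ] [CommSemiring R] (f : σ → ℕ) :
    ∏ i, (MvPolynomial.X i : MvPolynomial σ R) ^ f i
      = MvPolynomial.monomial (Finsupp.equivFunOnFinite.symm f) 1 := by
  rw [monomial_eq, C_1, one_mul, Finsupp.prod_fintype _ _ fun i => pow_zero _]
  rfl

private theorem coeff_S_pow17 {n d : ℕ} (l l' : Fin n → ℕ) (hl : ∑ k, l k ≤ d) :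
    MvPolynomial.coeff (Finsupp.equivFunOnFinite.symm (Sum.elim l l'))
      ((1 + ∑ k : Fin n, MvPolynomial.X (Sum.inl k) * MvPolynomial.X (Sum.inr k) :
        MvPolynomial (Fin n ⊕ Fin n) ℂ) ^ d)
    = if l = l' then
        (d.factorial : ℂ) /
          (((d - ∑ k, l k).factorial : ℂ) * ∏ k, ((l k).factorial : ℂ))
      else 0 := by
  classical
  set t : Option (Fin n) → MvPolynomial (Fin n ⊕ Fin n) ℂ :=
    fun o => o.elim 1 (fun k => MvPolynomial.X (Sum.inl k) * MvPolynomial.X (Sum.inr k)) with ht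
  have hS : (1 + ∑ k : Fin n, MvPolynomial.X (Sum.inl k) * MvPolynomial.X (Sum.inr k) :
      MvPolynomial (Fin n ⊕ Fin n) ℂ) = ∑ o : Option (Fin n), t o := by
    rw [Fintype.sum_option]; rfl
  have hprod : ∀ c : Option (Fin n) → ℕ,
      ∏ o, t o ^ c o = MvPolynomial.monomial
        (Finsupp.equivFunOnFinite.symm (Sum.elim (fun k => c (some k)) (fun k => c (some k)))) 1 := by
    intro c
    rw [Fintype.prod_option]
    simp only [ht, Option.elim, one_pow, one_mul]
    rw [← prod_X_pow_eq_monomial17, Fintype.prod_sum_type]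
    simp only [Sum.elim_inl, Sum.elim_inr]
    rw [← Finset.prod_mul_distrib]
    exact Finset.prod_congr rfl fun k _ => (mul_pow _ _ _)
  rw [hS, Finset.sum_pow_eq_sum_piAntidiag univ t d]
  rw [MvPolynomial.coeff_sum]
  have hcoeff : ∀ c : Option (Fin n) → ℕ,
      MvPolynomial.coeff (Finsupp.equivFunOnFinite.symm (Sum.elim l l'))
        ((Nat.multinomial univ c : MvPolynomial (Fin n ⊕ Fin n) ℂ) * ∏ o, t o ^ c o)
      = (Nat.multinomial univ c : ℂ) *
          (if (∀ k, c (some k) = l k) ∧ (∀ k, c (some k) = l' k) then 1 else 0) := by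
    intro c
    rw [hprod c, ← map_natCast (MvPolynomial.C : ℂ →+* MvPolynomial (Fin n ⊕ Fin n) ℂ),
      MvPolynomial.coeff_C_mul, MvPolynomial.coeff_monomial]
    congr 1
    have : (Finsupp.equivFunOnFinite.symm (Sum.elim (fun k => c (some k)) (fun k => c (some k)))
        = Finsupp.equivFunOnFinite.symm (Sum.elim l l'))
        ↔ ((∀ k, c (some k) = l k) ∧ (∀ k, c (some k) = l' k)) := by
      rw [Finsupp.equivFunOnFinite.symm.injective.eq_iff]
      constructor
      · intro h
        exact ⟨fun k => congrFun h (Sum.inl k), fun k => congrFun h (Sum.inr k)⟩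
      · rintro ⟨h1, h2⟩
        funext x
        cases x with
        | inl k => exact h1 k
        | inr k => exact h2 k
    simp only [this]
  rw [Finset.sum_congr rfl fun c _ => hcoeff c]
  by_cases hll : l = l'
  · subst hll
    rw [if_pos rfl]
    set c₀ : Option (Fin n) → ℕ := fun o => o.elim (d - ∑ k, l k) l with hc₀
    have hmem : c₀ ∈ piAntidiag (univ : Finset (Option (Fin n))) d := by
      rw [mem_piAntidiag]
      refine ⟨?_, fun i _ => mem_univ i⟩
      rw [Fintype.sum_option]
      simpa using Nat.sub_add_cancel hl
    rw [Finset.sum_eq_single_of_mem c₀ hmem]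
    · rw [if_pos ⟨fun k => rfl, fun k => rfl⟩, mul_one]
      have hspec := Nat.multinomial_spec (univ : Finset (Option (Fin n))) c₀
      have hsum : ∑ o, c₀ o = d := by
        rw [Fintype.sum_option]; exact Nat.sub_add_cancel hl
      rw [hsum] at hspec
      have hprod₀ : ∏ o, (c₀ o).factorial = (d - ∑ k, l k).factorial * ∏ k, (l k).factorial := by
        rw [Fintype.prod_option]; rfl
      rw [hprod₀] at hspec
      have hC : ((d - ∑ k, l k).factorial : ℂ) * ∏ k, ((l k).factorial : ℂ) ≠ 0 :=
        mul_ne_zero (Nat.cast_ne_zero.2 (Nat.factorial_ne_zero _))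
          (Finset.prod_ne_zero_iff.2 fun k _ => Nat.cast_ne_zero.2 (Nat.factorial_ne_zero _))
      rw [eq_div_iff hC, ← hspec]
      push_cast
      ring
    · intro c hc hne
      rw [mem_piAntidiag] at hc
      rw [if_neg, mul_zero]
      rintro ⟨h1, -⟩
      apply hne
      funext o
      cases o with
      | some k => exact h1 k
      | none =>
          have : c none + ∑ k, c (some k) = d := by
            rw [← hc.1, Fintype.sum_option]
          simp only [hc₀, Option.elim]
          rw [Finset.sum_congr rfl fun k _ => h1 k] at this
          exact Nat.eq_sub_of_add_eq this
  · rw [if_neg hll]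
    apply Finset.sum_eq_zero
    intro c _
    rw [if_neg, mul_zero]
    rintro ⟨h1, h2⟩
    exact hll (funext fun k => (h1 k).symm.trans (h2 k))

end Aux

/-- Orthogonality of the multivariate Krawtchouk polynomials `Q_l(m)` (the
coefficient of `w^l` in `Π_j (1 + Σ_k w_k θ₁^{jk})^{m_j}`) with respect to the uniform
multinomial distribution on counts of `d` symbols from `q` types:
`Σ_m (d choose m) q^{-d} Q_l(m) conj(Q_{l'}(m)) = 𝟙{l=l'} d!/((d−|l|)! l₁!⋯l_{q−1}!)`. -/
theorem statement17 (q d : ℕ) (hq : 2 ≤ q) (hd : 1 ≤ d) :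
    let θ₁ : ℂ := Complex.exp (2 * Real.pi * Complex.I / q)
    let Q : (Fin (q - 1) → ℕ) → (Fin q → ℕ) → ℂ := fun l m =>
      MvPolynomial.coeff (Finsupp.equivFunOnFinite.symm l)
        (∏ j : Fin q, (1 + ∑ k : Fin (q - 1),
          MvPolynomial.X k * MvPolynomial.C (θ₁ ^ ((j : ℕ) * ((k : ℕ) + 1)))) ^ (m j))
    ∀ l l' : Fin (q - 1) → ℕ, (∑ k, l k) ≤ d → (∑ k, l' k) ≤ d →
      ∑ m ∈ Finset.Nat.antidiagonalTuple q d,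
          ((Nat.multinomial Finset.univ m : ℂ) / (q : ℂ) ^ d)
            * Q l m * (starRingEnd ℂ) (Q l' m)
        = if l = l' then
            (d.factorial : ℂ) /
              (((d - ∑ k, l k).factorial : ℂ) * ∏ k, ((l k).factorial : ℂ))
          else 0 := by
  intro θ₁ Q l l' hl hl'
  classical
  have hq0 : q ≠ 0 := by omega
  have hprim : IsPrimitiveRoot θ₁ q := Complex.isPrimitiveRoot_exp q hq0
  have hconj : (starRingEnd ℂ) θ₁ = θ₁⁻¹ := by
    rw [show θ₁ = Complex.exp (2 * Real.pi * Complex.I / q) from rfl,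
      ← Complex.exp_conj, ← Complex.exp_neg]
    congr 1
    simp [map_div₀, Complex.conj_I, Complex.conj_ofNat]
    ring
  have hqC : ((q : ℂ)) ^ d ≠ 0 := pow_ne_zero d (Nat.cast_ne_zero.2 hq0)
  set f : Fin q → MvPolynomial (Fin (q - 1)) ℂ := fun j =>
    1 + ∑ k : Fin (q - 1), MvPolynomial.X k * MvPolynomial.C (θ₁ ^ ((j : ℕ) * ((k : ℕ) + 1)))
    with hf
  set g : Fin q → MvPolynomial (Fin (q - 1)) ℂ := fun j =>
    1 + ∑ k : Fin (q - 1), MvPolynomial.X k * MvPolynomial.C ((starRingEnd ℂ) (θ₁ ^ ((j : ℕ) * ((k : ℕ) + 1))))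
    with hg
  set H : Fin q → MvPolynomial (Fin (q - 1) ⊕ Fin (q - 1)) ℂ := fun j =>
    MvPolynomial.rename Sum.inl (f j) * MvPolynomial.rename Sum.inr (g j) with hH
  set μ : (Fin (q - 1) ⊕ Fin (q - 1)) →₀ ℕ := Finsupp.equivFunOnFinite.symm (Sum.elim l l') with hμ
  -- Step A
  have stepA : ∀ m : Fin q → ℕ,
      Q l m * (starRingEnd ℂ) (Q l' m) = MvPolynomial.coeff μ (∏ j, H j ^ m j) := by
    intro m
    have hQl : Q l m = MvPolynomial.coeff (Finsupp.equivFunOnFinite.symm l) (∏ j, f j ^ m j) := rfl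
    have hQl' : (starRingEnd ℂ) (Q l' m)
        = MvPolynomial.coeff (Finsupp.equivFunOnFinite.symm l') (∏ j, g j ^ m j) := by
      show (starRingEnd ℂ) (MvPolynomial.coeff (Finsupp.equivFunOnFinite.symm l') (∏ j, f j ^ m j)) = _
      rw [← MvPolynomial.coeff_map]
      congr 1
      rw [map_prod]
      refine Finset.prod_congr rfl fun j _ => ?_
      rw [map_pow]
      congr 1
      simp [hf, hg]
    rw [hQl, hQl', ← coeff_rename_mul17, hμ]
    congr 1
    rw [map_prod, map_prod, ← Finset.prod_mul_distrib]
    exact Finset.prod_congr rfl fun j _ => by rw [map_pow, map_pow, hH, mul_pow]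
  -- Step B : collapse the m-sum
  have stepB : ∑ m ∈ Finset.Nat.antidiagonalTuple q d,
      ((Nat.multinomial Finset.univ m : ℂ) / (q : ℂ) ^ d) * Q l m * (starRingEnd ℂ) (Q l' m)
      = ((q : ℂ) ^ d)⁻¹ * MvPolynomial.coeff μ ((∑ j, H j) ^ d) := by
    rw [Finset.sum_pow_eq_sum_piAntidiag univ H d, Finset.piAntidiag_univ_fin_eq_antidiagonalTuple,
      MvPolynomial.coeff_sum, Finset.mul_sum, Finset.sum_congr rfl]
    intro m _
    rw [mul_assoc, stepA m, ← map_natCast (MvPolynomial.C : ℂ →+* MvPolynomial (Fin (q - 1) ⊕ Fin (q - 1)) ℂ),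
      MvPolynomial.coeff_C_mul]
    ring
  have hHsum : ∑ j, H j = ∑ j : Fin q,
      ((1 + ∑ k : Fin (q - 1), MvPolynomial.X (Sum.inl k) * MvPolynomial.C (θ₁ ^ ((j : ℕ) * ((k : ℕ) + 1)))) *
       (1 + ∑ k : Fin (q - 1), MvPolynomial.X (Sum.inr k) * MvPolynomial.C ((starRingEnd ℂ) (θ₁ ^ ((j : ℕ) * ((k : ℕ) + 1)))))
        : MvPolynomial (Fin (q - 1) ⊕ Fin (q - 1)) ℂ) := by
    refine Finset.sum_congr rfl fun j _ => ?_
    rw [hH]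
    simp [hf, hg]
  rw [stepB, hHsum, sum_H17 hq hprim hconj, mul_pow, ← map_pow, MvPolynomial.coeff_C_mul, hμ,
    coeff_S_pow17 l l' hl, ← mul_assoc, inv_mul_cancel₀ hqC, one_mul]
end
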